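/- Let p ≥ 1 be an integer, let N be a p-rooted almost-binary phylogenetic network on X, and let {Z_1, ..., Z_d} be the maximal zig-zag trail decomposition of N. For any S ⊆ E(N), the induced subgraph N[S] is a minimal support network of N if and only if S ∩ E(Z_i) is a B-admissible subset of E(Z_i) for every i ∈ [1, d]. -/

import Mathlib

set_option linter.unusedSectionVars false


open Finset

variable {V : Type} [DecidableEq V] [Fintype V]

/-- The vertex set of the digraph given by the edge set `E`. -/
def verts (E : Finset (V × V)) : Finset V :=
  E.image Prod.fst ∪ E.image Prod.snd

/-- In-degree of `v` in the digraph with edge set `E`. -/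
def indeg (E : Finset (V × V)) (v : V) : ℕ :=
  (E.filter fun e => e.2 = v).card

/-- Out-degree of `v` in the digraph with edge set `E`. -/
def outdeg (E : Finset (V × V)) (v : V) : ℕ :=
  (E.filter fun e => e.1 = v).card

/-- `E` is (the edge set of) a `p`-rooted almost-binary phylogenetic network on `X`:
a finite simple DAG with exactly `p` in-degree-0 vertices, each of out-degree 1 or 2 (the roots),
whose set of in-degree-1, out-degree-0 vertices is `X` (the leaves), and all of whose other
vertices have in-degree and out-degree in `{1, 2}`. -/
structure IsPhyloNet (E : Finset (V × V)) (p : ℕ) (X : Finset V) : Prop where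
  acyclic : ∀ v : V, ¬ Relation.TransGen (fun a b => (a, b) ∈ E) v v
  roots_card : ((verts E).filter fun v => indeg E v = 0).card = p
  root_outdeg : ∀ v ∈ verts E, indeg E v = 0 → outdeg E v = 1 ∨ outdeg E v = 2
  leaves_eq : (verts E).filter (fun v => indeg E v = 1 ∧ outdeg E v = 0) = X
  internal_deg : ∀ v ∈ verts E, indeg E v ≠ 0 → v ∉ X →
    (indeg E v = 1 ∨ indeg E v = 2) ∧ (outdeg E v = 1 ∨ outdeg E v = 2)

/-- Two directed edges share a tail or share a head. -/
def Shares (e f : V × V) : Prop := e.1 = f.1 ∨ e.2 = f.2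

/-- `S` is (the edge set of) a zig-zag trail of the digraph `E`: a subgraph with `m ≥ 1`
edges which can be ordered so that consecutive edges share a head or share a tail. -/
def IsZigzagTrail (E S : Finset (V × V)) : Prop :=
  S ⊆ E ∧ ∃ l : List (V × V), l ≠ [] ∧ l.Nodup ∧ l.toFinset = S ∧ l.Chain' Shares

/-- A maximal zig-zag trail: one that is not a proper subgraph of another zig-zag trail. -/
def IsMaximalZigzagTrail (E S : Finset (V × V)) : Prop :=
  IsZigzagTrail E S ∧ ∀ S', IsZigzagTrail E S' → ¬ S ⊂ S'

/-- The `i`-th edge (0-indexed) of a zig-zag sequence on vertices `f 0, f 1, ...`;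
when `down = true` the first edge descends (`f 0 > f 1`), and directions alternate. -/
def zigEdge (f : ℕ → V) (down : Bool) (i : ℕ) : V × V :=
  if decide (i % 2 = 0) = down then (f i, f (i + 1)) else (f (i + 1), f i)

/-- `S` consists of the `m` distinct edges of the zig-zag sequence on `f 0, ..., f m`. -/
def IsZigzagShape (S : Finset (V × V)) (m : ℕ) (f : ℕ → V) (down : Bool) : Prop :=
  S = (Finset.range m).image (zigEdge f down) ∧
  ∀ i < m, ∀ j < m, zigEdge f down i = zigEdge f down j → i = j

/-- A crown: an even number `m` of edges written cyclically as `v₀ > v₁ < ⋯ < v_m = v₀`. -/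
def IsCrown (S : Finset (V × V)) : Prop :=
  ∃ m f, 1 ≤ m ∧ m % 2 = 0 ∧ f m = f 0 ∧ IsZigzagShape S m f true

/-- An M-fence: a non-crown with an even number `m` of edges,
of the form `v₀ < v₁ > ⋯ > v_m ≠ v₀`. -/
def IsMFence (S : Finset (V × V)) : Prop :=
  ¬ IsCrown S ∧ ∃ m f, 1 ≤ m ∧ m % 2 = 0 ∧ f m ≠ f 0 ∧ IsZigzagShape S m f false

/-- A W-fence: a non-crown with an even number `m` of edges,
of the form `v₀ > v₁ < ⋯ < v_m ≠ v₀`. -/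
def IsWFence (S : Finset (V × V)) : Prop :=
  ¬ IsCrown S ∧ ∃ m f, 1 ≤ m ∧ m % 2 = 0 ∧ f m ≠ f 0 ∧ IsZigzagShape S m f true

/-- An N-fence: a non-crown with an odd number `m` of edges,
of the form `v₀ > v₁ < ⋯ > v_m`. -/
def IsNFence (S : Finset (V × V)) : Prop :=
  ¬ IsCrown S ∧ ∃ m f, m % 2 = 1 ∧ IsZigzagShape S m f true

/-- A support network of `N = (V, E)`: a spanning subgraph that is itself a
`p`-rooted almost-binary phylogenetic network on `X` (identified with its edge set). -/
def IsSupportNet (E S : Finset (V × V)) (p : ℕ) (X : Finset V) : Prop :=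
  S ⊆ E ∧ verts S = verts E ∧ IsPhyloNet S p X

/-- A minimal support network: no support network is a proper subgraph of it. -/
def IsMinimalSupportNet (E S : Finset (V × V)) (p : ℕ) (X : Finset V) : Prop :=
  IsSupportNet E S p X ∧ ∀ S', IsSupportNet E S' p X → ¬ S' ⊂ S

/-- A minimum support network: one with the fewest edges among all support networks. -/
def IsMinimumSupportNet (E S : Finset (V × V)) (p : ℕ) (X : Finset V) : Prop :=
  IsSupportNet E S p X ∧ ∀ S', IsSupportNet E S' p X → S.card ≤ S'.card

/-- `S ⊆ Z` is A-admissible (degrees taken in the ambient network `E`):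
(C1) `S` contains every edge `(u,v)` of `Z` with `outdeg u = 1` or `indeg v = 1`;
(C2) of any two distinct edges of `Z` sharing a tail or a head, `S` contains at least one. -/
def AAdmissible (E Z S : Finset (V × V)) : Prop :=
  S ⊆ Z ∧
  (∀ e ∈ Z, (outdeg E e.1 = 1 ∨ indeg E e.2 = 1) → e ∈ S) ∧
  (∀ e₁ ∈ Z, ∀ e₂ ∈ Z, e₁ ≠ e₂ → Shares e₁ e₂ → e₁ ∈ S ∨ e₂ ∈ S)

/-- A B-admissible subset: an A-admissible subset none of whose proper subsets
is A-admissible. -/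
def BAdmissible (E Z S : Finset (V × V)) : Prop :=
  AAdmissible E Z S ∧ ∀ S', S' ⊂ S → ¬ AAdmissible E Z S'

/-- A C-admissible subset: an A-admissible subset of minimum cardinality. -/
def CAdmissible (E Z S : Finset (V × V)) : Prop :=
  AAdmissible E Z S ∧ ∀ S', AAdmissible E Z S' → S.card ≤ S'.card

/-- One subdivision step: an edge `(u, v)` is replaced by `(u, w), (w, v)` for a fresh
vertex `w`. -/
def SubdivStep (T T' : Finset (V × V)) : Prop :=
  ∃ u w v, (u, v) ∈ T ∧ w ∉ verts T ∧
    T' = insert (u, w) (insert (w, v) (T.erase (u, v)))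

/-- `S` is a subdivision of `T` (zero or more subdivision steps). -/
def IsSubdivisionOf (S T : Finset (V × V)) : Prop :=
  Relation.ReflTransGen SubdivStep T S

/-- A rooted binary phylogenetic tree on `X`: a 1-rooted network on `X` in which every
non-root, non-leaf vertex has in-degree 1 and out-degree 2. -/
def IsBinaryPhyloTree (T : Finset (V × V)) (X : Finset V) : Prop :=
  IsPhyloNet T 1 X ∧
  ∀ v ∈ verts T, indeg T v ≠ 0 → v ∉ X → indeg T v = 1 ∧ outdeg T v = 2

/-- `N = (V, E)` is tree-based: it has a support tree, i.e. a spanning subgraph that is a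
subdivision of some rooted binary phylogenetic tree on `X`. -/
def IsTreeBased (E : Finset (V × V)) (X : Finset V) : Prop :=
  ∃ S T, S ⊆ E ∧ verts S = verts E ∧ IsBinaryPhyloTree T X ∧ IsSubdivisionOf S T

/-- The underlying undirected simple graph of the digraph with edge set `S`. -/
def usym (S : Finset (V × V)) : SimpleGraph V where
  Adj u v := u ≠ v ∧ ((u, v) ∈ S ∨ (v, u) ∈ S)
  symm := ⟨fun _ _ h => ⟨h.1.symm, h.2.symm⟩⟩
  loopless := ⟨fun _ h => h.1 rfl⟩

/-- Two edges of `S` lie in a common block of the underlying undirected graph: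
they are equal or lie on a common cycle. -/
def SameBlock (S : Finset (V × V)) (e f : V × V) : Prop :=
  e = f ∨ ∃ (a : V) (w : (usym S).Walk a a), w.IsCycle ∧
    s(e.1, e.2) ∈ w.edges ∧ s(f.1, f.2) ∈ w.edges

/-- The number of reticulations (in-degree-2 vertices) contained in the block of the
edge `e` of `S`. -/
noncomputable def blockReticCount (S : Finset (V × V)) (e : V × V) : ℕ :=
  Set.ncard {v : V | indeg S v = 2 ∧ ∃ f ∈ S, SameBlock S e f ∧ (f.1 = v ∨ f.2 = v)}

/-- The level of the network with edge set `S`: the maximum number of reticulations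
contained in a block. -/
noncomputable def level (S : Finset (V × V)) : ℕ :=
  S.sup (blockReticCount S)

section AuxLemmas

variable {V : Type} [DecidableEq V] [Fintype V]

lemma verts_mono {A B : Finset (V × V)} (h : A ⊆ B) : verts A ⊆ verts B :=
  Finset.union_subset_union (Finset.image_subset_image h) (Finset.image_subset_image h)

lemma fst_mem_verts {A : Finset (V × V)} {e : V × V} (he : e ∈ A) : e.1 ∈ verts A :=
  Finset.mem_union_left _ (Finset.mem_image_of_mem _ he)

lemma snd_mem_verts {A : Finset (V × V)} {e : V × V} (he : e ∈ A) : e.2 ∈ verts A :=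
  Finset.mem_union_right _ (Finset.mem_image_of_mem _ he)

lemma indeg_mono {A B : Finset (V × V)} (h : A ⊆ B) (v : V) : indeg A v ≤ indeg B v :=
  Finset.card_le_card (Finset.filter_subset_filter _ h)

lemma outdeg_mono {A B : Finset (V × V)} (h : A ⊆ B) (v : V) : outdeg A v ≤ outdeg B v :=
  Finset.card_le_card (Finset.filter_subset_filter _ h)

lemma indeg_ne_zero_iff {A : Finset (V × V)} {v : V} :
    indeg A v ≠ 0 ↔ ∃ e ∈ A, e.2 = v := by
  rw [indeg, Ne, Finset.card_eq_zero, Finset.filter_eq_empty_iff]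
  push_neg
  rfl

lemma outdeg_ne_zero_iff {A : Finset (V × V)} {v : V} :
    outdeg A v ≠ 0 ↔ ∃ e ∈ A, e.1 = v := by
  rw [outdeg, Ne, Finset.card_eq_zero, Finset.filter_eq_empty_iff]
  push_neg
  rfl

lemma mem_verts_iff {A : Finset (V × V)} {v : V} :
    v ∈ verts A ↔ outdeg A v ≠ 0 ∨ indeg A v ≠ 0 := by
  rw [verts, Finset.mem_union, outdeg_ne_zero_iff, indeg_ne_zero_iff]
  simp [Finset.mem_image]

lemma leaf_deg {E : Finset (V × V)} {p : ℕ} {X : Finset V} (hN : IsPhyloNet E p X)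
    {v : V} (hv : v ∈ X) : indeg E v = 1 ∧ outdeg E v = 0 := by
  rw [← hN.leaves_eq] at hv
  exact (Finset.mem_filter.mp hv).2

lemma X_subset_verts {E : Finset (V × V)} {p : ℕ} {X : Finset V} (hN : IsPhyloNet E p X)
    {v : V} (hv : v ∈ X) : v ∈ verts E := by
  rw [← hN.leaves_eq] at hv
  exact (Finset.mem_filter.mp hv).1

lemma deg_le_two {E : Finset (V × V)} {p : ℕ} {X : Finset V} (hN : IsPhyloNet E p X)
    (v : V) : indeg E v ≤ 2 ∧ outdeg E v ≤ 2 := by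
  by_cases hv : v ∈ verts E
  · by_cases h0 : indeg E v = 0
    · have := hN.root_outdeg v hv h0; omega
    · by_cases hX : v ∈ X
      · have := leaf_deg hN hX; omega
      · have := hN.internal_deg v hv h0 hX; omega
  · rw [mem_verts_iff] at hv
    push_neg at hv
    omega

lemma three_same_tail {E : Finset (V × V)} {p : ℕ} {X : Finset V} (hN : IsPhyloNet E p X)
    {e f g : V × V} (he : e ∈ E) (hf : f ∈ E) (hg : g ∈ E)
    (hef : e ≠ f) (heg : e ≠ g) (hfg : f ≠ g)
    (h1 : e.1 = f.1) (h2 : e.1 = g.1) : False := by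
  have hsub : ({e, f, g} : Finset (V × V)) ⊆ E.filter (fun x => x.1 = e.1) := by
    intro x hx
    simp only [Finset.mem_insert, Finset.mem_singleton] at hx
    rcases hx with rfl | rfl | rfl <;> simp [Finset.mem_filter, he, hf, hg, h1.symm, h2.symm]
  have hcard : ({e, f, g} : Finset (V × V)).card = 3 := by
    rw [Finset.card_insert_of_notMem (by simp [hef, heg]),
      Finset.card_insert_of_notMem (by simp [hfg]), Finset.card_singleton]
  have h3 : 3 ≤ outdeg E e.1 := by
    rw [← hcard]; exact Finset.card_le_card hsub
  have := (deg_le_two hN e.1).2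
  omega

lemma three_same_head {E : Finset (V × V)} {p : ℕ} {X : Finset V} (hN : IsPhyloNet E p X)
    {e f g : V × V} (he : e ∈ E) (hf : f ∈ E) (hg : g ∈ E)
    (hef : e ≠ f) (heg : e ≠ g) (hfg : f ≠ g)
    (h1 : e.2 = f.2) (h2 : e.2 = g.2) : False := by
  have hsub : ({e, f, g} : Finset (V × V)) ⊆ E.filter (fun x => x.2 = e.2) := by
    intro x hx
    simp only [Finset.mem_insert, Finset.mem_singleton] at hx
    rcases hx with rfl | rfl | rfl <;> simp [Finset.mem_filter, he, hf, hg, h1.symm, h2.symm]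
  have hcard : ({e, f, g} : Finset (V × V)).card = 3 := by
    rw [Finset.card_insert_of_notMem (by simp [hef, heg]),
      Finset.card_insert_of_notMem (by simp [hfg]), Finset.card_singleton]
  have h3 : 3 ≤ indeg E e.2 := by
    rw [← hcard]; exact Finset.card_le_card hsub
  have := (deg_le_two hN e.2).1
  omega

lemma four_shares {E : Finset (V × V)} {p : ℕ} {X : Finset V} (hN : IsPhyloNet E p X)
    {e f g h : V × V} (he : e ∈ E) (hf : f ∈ E) (hg : g ∈ E) (hh : h ∈ E)
    (hef : e ≠ f) (heg : e ≠ g) (heh : e ≠ h) (hfg : f ≠ g) (hfh : f ≠ h) (hgh : g ≠ h)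
    (s1 : Shares e f) (s2 : Shares e g) (s3 : Shares e h) : False := by
  rcases s1 with s1 | s1 <;> rcases s2 with s2 | s2 <;> rcases s3 with s3 | s3
  · exact three_same_tail hN he hf hg hef heg hfg s1 s2
  · exact three_same_tail hN he hf hg hef heg hfg s1 s2
  · exact three_same_tail hN he hf hh hef heh hfh s1 s3
  · exact three_same_head hN he hg hh heg heh hgh s2 s3
  · exact three_same_tail hN he hg hh heg heh hgh s2 s3
  · exact three_same_head hN he hf hh hef heh hfh s1 s3
  · exact three_same_head hN he hf hg hef heg hfg s1 s2
  · exact three_same_head hN he hf hg hef heg hfg s1 s2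

end AuxLemmas

section AuxLemmas2

variable {V : Type} [DecidableEq V] [Fintype V]

/-- Covering condition: `S` keeps positive in/out degree wherever `E` has it. -/
def Cov (E S : Finset (V × V)) : Prop :=
  ∀ v : V, (indeg E v ≠ 0 → indeg S v ≠ 0) ∧ (outdeg E v ≠ 0 → outdeg S v ≠ 0)

lemma support_iff_cov {E S : Finset (V × V)} {p : ℕ} {X : Finset V}
    (hN : IsPhyloNet E p X) (hS : S ⊆ E) :
    IsSupportNet E S p X ↔ Cov E S := by
  constructor
  · rintro ⟨-, hverts, hSN⟩ v
    constructor
    · intro hE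
      intro hS0
      have hvE : v ∈ verts E := by
        obtain ⟨e, he, hev⟩ := indeg_ne_zero_iff.mp hE
        exact hev ▸ snd_mem_verts he
      have hsub : (verts E).filter (fun v => indeg E v = 0) ⊆
          (verts S).filter (fun v => indeg S v = 0) := by
        intro u hu
        rw [Finset.mem_filter] at hu ⊢
        have := indeg_mono hS u
        exact ⟨hverts ▸ hu.1, by omega⟩
      have heq : (verts E).filter (fun v => indeg E v = 0) =
          (verts S).filter (fun v => indeg S v = 0) :=
        Finset.eq_of_subset_of_card_le hsub (by rw [hSN.roots_card, hN.roots_card])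
      have hvmem : v ∈ (verts S).filter (fun v => indeg S v = 0) :=
        Finset.mem_filter.mpr ⟨hverts ▸ hvE, hS0⟩
      rw [← heq, Finset.mem_filter] at hvmem
      exact hE hvmem.2
    · intro hE
      have hvE : v ∈ verts E := by
        obtain ⟨e, he, hev⟩ := outdeg_ne_zero_iff.mp hE
        exact hev ▸ fst_mem_verts he
      have hvS : v ∈ verts S := hverts ▸ hvE
      by_cases h0 : indeg S v = 0
      · have := hSN.root_outdeg v hvS h0; omega
      · by_cases hXv : v ∈ X
        · have := (leaf_deg hN hXv).2; omega
        · have := (hSN.internal_deg v hvS h0 hXv).2; omega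
  · intro hcov
    have hverts : verts S = verts E := by
      apply Finset.Subset.antisymm (verts_mono hS)
      intro v hv
      rw [mem_verts_iff] at hv ⊢
      rcases hv with h | h
      · exact Or.inl ((hcov v).2 h)
      · exact Or.inr ((hcov v).1 h)
    refine ⟨hS, hverts, ?_, ?_, ?_, ?_, ?_⟩
    · intro v hv
      exact hN.acyclic v (Relation.TransGen.mono (fun a b hab => hS hab) v v hv)
    · have hroots : (verts S).filter (fun v => indeg S v = 0) =
          (verts E).filter (fun v => indeg E v = 0) := by
        ext v
        simp only [Finset.mem_filter, hverts]
        constructor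
        · rintro ⟨h1, h2⟩
          refine ⟨h1, ?_⟩
          by_contra h
          exact (hcov v).1 h h2
        · rintro ⟨h1, h2⟩
          have := indeg_mono hS v
          exact ⟨h1, by omega⟩
      rw [hroots]; exact hN.roots_card
    · intro v hvS h0
      have hvE : v ∈ verts E := hverts ▸ hvS
      have h0E : indeg E v = 0 := by
        by_contra h
        exact (hcov v).1 h h0
      have h1 := hN.root_outdeg v hvE h0E
      have h2 := outdeg_mono hS v
      have h3 := (hcov v).2
      omega
    · ext v
      rw [Finset.mem_filter, hverts]
      constructor
      · rintro ⟨hv, h1, h2⟩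
        have houtE : outdeg E v = 0 := by
          by_contra h
          exact (hcov v).2 h h2
        have hinE : indeg E v ≠ 0 := by
          have := indeg_mono hS v; omega
        by_contra hX
        have := (hN.internal_deg v hv hinE hX).2
        omega
      · intro hv
        have hl := leaf_deg hN hv
        refine ⟨X_subset_verts hN hv, ?_, ?_⟩
        · have h := (hcov v).1 (by omega)
          have := indeg_mono hS v
          omega
        · have := outdeg_mono hS v
          omega
    · intro v hvS h0 hX
      have hvE : v ∈ verts E := hverts ▸ hvS
      have hinE : indeg E v ≠ 0 := by
        have := indeg_mono hS v; omega
      have h1 := hN.internal_deg v hvE hinE hX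
      have h2 := indeg_mono hS v
      have h3 := outdeg_mono hS v
      have h4 := (hcov v).2
      omega

end AuxLemmas2

section AuxLemmas3

variable {V : Type} [DecidableEq V] [Fintype V]

lemma shares_symm {e f : V × V} (h : Shares e f) : Shares f e := h.imp Eq.symm Eq.symm

lemma same_trail {E : Finset (V × V)} {p : ℕ} {X : Finset V} (hN : IsPhyloNet E p X)
    {d : ℕ} {Z : Fin d → Finset (V × V)}
    (hmax : ∀ i, IsMaximalZigzagTrail E (Z i))
    (hdisj : ∀ i j, i ≠ j → Disjoint (Z i) (Z j))
    {e f : V × V} (hfE : f ∈ E) (hef : e ≠ f) (hsh : Shares e f)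
    {i j : Fin d} (hei : e ∈ Z i) (hfj : f ∈ Z j) : i = j := by
  by_contra hij
  have hfi : f ∉ Z i := Finset.disjoint_right.mp (hdisj i j hij) hfj
  obtain ⟨⟨hZE, l, hne, hnd, hlf, hch⟩, hmaxi⟩ := hmax i
  have hel : e ∈ l := by rw [← hlf] at hei; exact List.mem_toFinset.mp hei
  have hfl : f ∉ l := by rw [← hlf] at hfi; exact fun h => hfi (List.mem_toFinset.mpr h)
  obtain ⟨k, hk, hek⟩ := List.mem_iff_getElem.mp hel
  by_cases hlast : k + 1 = l.length
  · -- e is the last entry: extend with f at the end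
    have hgl : l.getLast? = some e := by
      rw [List.getLast?_eq_getElem?, List.getElem?_eq_getElem (by omega)]
      simp only [show l.length - 1 = k from by omega, hek]
    have hchain : List.Chain' Shares (l ++ [f]) := by
      show List.IsChain Shares (l ++ [f])
      rw [List.isChain_append]
      refine ⟨hch, List.isChain_singleton f, ?_⟩
      intro x hx y hy
      rw [hgl, Option.mem_def, Option.some_inj] at hx
      simp only [List.head?_cons, Option.mem_def, Option.some_inj] at hy
      subst hx; subst hy; exact hsh
    have hzz : IsZigzagTrail E (insert f (Z i)) := by
      refine ⟨Finset.insert_subset hfE hZE, l ++ [f], by simp, ?_, ?_, hchain⟩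
      · refine List.Nodup.append hnd (List.nodup_singleton f) ?_
        intro a ha hb
        simp only [List.mem_singleton] at hb
        subst hb; exact hfl ha
      · rw [List.toFinset_append, hlf]
        ext x; simp [or_comm]
    exact hmaxi _ hzz (Finset.ssubset_insert hfi)
  · by_cases hfirst : k = 0
    · -- e is the first entry: extend with f at the front
      have hhd : l.head? = some e := by
        rw [List.head?_eq_getElem?, List.getElem?_eq_getElem (by omega)]
        simp only [← hfirst, hek]
      have hchain : List.Chain' Shares (f :: l) := by
        show List.IsChain Shares (f :: l)
        rw [List.isChain_cons]
        refine ⟨?_, hch⟩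
        intro y hy
        rw [hhd, Option.mem_def, Option.some_inj] at hy
        subst hy; exact shares_symm hsh
      have hzz : IsZigzagTrail E (insert f (Z i)) := by
        refine ⟨Finset.insert_subset hfE hZE, f :: l, by simp, ?_, ?_, hchain⟩
        · exact List.nodup_cons.mpr ⟨hfl, hnd⟩
        · rw [List.toFinset_cons, hlf]
      exact hmaxi _ hzz (Finset.ssubset_insert hfi)
    · -- e is interior: its two list-neighbours plus f give three sharers
      obtain ⟨m, rfl⟩ : ∃ m, k = m + 1 := ⟨k - 1, by omega⟩
      have hch' := List.isChain_iff_getElem.mp hch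
      have s1 := hch' m (by omega)
      have s2 := hch' (m + 1) (by omega)
      rw [hek] at s1 s2
      have hg1 : l[m]'(by omega) ∈ l := List.getElem_mem _
      have hg2 : l[m + 1 + 1]'(by omega) ∈ l := List.getElem_mem _
      have hg1E : l[m]'(by omega) ∈ E := hZE (hlf ▸ List.mem_toFinset.mpr hg1)
      have hg2E : l[m + 1 + 1]'(by omega) ∈ E := hZE (hlf ▸ List.mem_toFinset.mpr hg2)
      have heE : e ∈ E := hZE hei
      have d1 : e ≠ l[m]'(by omega) := by
        intro h
        rw [← hek] at h
        have := (List.Nodup.getElem_inj_iff hnd).mp h.symm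
        omega
      have d2 : e ≠ l[m + 1 + 1]'(by omega) := by
        intro h
        rw [← hek] at h
        have := (List.Nodup.getElem_inj_iff hnd).mp h.symm
        omega
      have d3 : f ≠ l[m]'(by omega) := fun h => hfl (h ▸ hg1)
      have d4 : f ≠ l[m + 1 + 1]'(by omega) := fun h => hfl (h ▸ hg2)
      have d5 : l[m]'(by omega) ≠ l[m + 1 + 1]'(by omega) := by
        intro h
        have := (List.Nodup.getElem_inj_iff hnd).mp h
        omega
      exact four_shares hN heE hfE hg1E hg2E hef d1 d2 d3 d4 d5
        hsh (shares_symm s1) s2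

end AuxLemmas3

section AuxLemmas4

variable {V : Type} [DecidableEq V] [Fintype V]

lemma support_iff_adm {E S : Finset (V × V)} {p : ℕ} {X : Finset V}
    (hN : IsPhyloNet E p X) {d : ℕ} {Z : Fin d → Finset (V × V)}
    (hmax : ∀ i, IsMaximalZigzagTrail E (Z i))
    (hdisj : ∀ i j, i ≠ j → Disjoint (Z i) (Z j))
    (hcover : Finset.univ.biUnion Z = E)
    (hS : S ⊆ E) :
    IsSupportNet E S p X ↔ ∀ i, AAdmissible E (Z i) (S ∩ Z i) := by
  rw [support_iff_cov hN hS]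
  constructor
  · intro hcov i
    have hZE : Z i ⊆ E := (hmax i).1.1
    refine ⟨Finset.inter_subset_right, ?_, ?_⟩
    · intro e heZ hdeg
      have heE : e ∈ E := hZE heZ
      rcases hdeg with h1 | h1
      · have hex := (hcov e.1).2 (by omega)
        obtain ⟨g, hgS, hg1⟩ := outdeg_ne_zero_iff.mp hex
        have hge : g = e := by
          by_contra hne
          have hsub : ({g, e} : Finset (V × V)) ⊆ E.filter (fun x => x.1 = e.1) := by
            intro x hx
            simp only [Finset.mem_insert, Finset.mem_singleton] at hx
            rcases hx with rfl | rfl <;> simp [Finset.mem_filter, hS hgS, heE, hg1]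
          have h2 := Finset.card_le_card hsub
          rw [Finset.card_insert_of_notMem (by simp [hne]), Finset.card_singleton] at h2
          unfold outdeg at h1
          omega
        exact Finset.mem_inter.mpr ⟨hge ▸ hgS, heZ⟩
      · have hex := (hcov e.2).1 (by omega)
        obtain ⟨g, hgS, hg1⟩ := indeg_ne_zero_iff.mp hex
        have hge : g = e := by
          by_contra hne
          have hsub : ({g, e} : Finset (V × V)) ⊆ E.filter (fun x => x.2 = e.2) := by
            intro x hx
            simp only [Finset.mem_insert, Finset.mem_singleton] at hx
            rcases hx with rfl | rfl <;> simp [Finset.mem_filter, hS hgS, heE, hg1]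
          have h2 := Finset.card_le_card hsub
          rw [Finset.card_insert_of_notMem (by simp [hne]), Finset.card_singleton] at h2
          unfold indeg at h1
          omega
        exact Finset.mem_inter.mpr ⟨hge ▸ hgS, heZ⟩
    · intro e₁ h1 e₂ h2 hne hsh
      rcases hsh with h | h
      · have hex := (hcov e₁.1).2 (by rw [outdeg_ne_zero_iff]; exact ⟨e₁, hZE h1, rfl⟩)
        obtain ⟨g, hgS, hg1⟩ := outdeg_ne_zero_iff.mp hex
        by_cases hgA : g = e₁
        · exact Or.inl (Finset.mem_inter.mpr ⟨hgA ▸ hgS, h1⟩)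
        · by_cases hgB : g = e₂
          · exact Or.inr (Finset.mem_inter.mpr ⟨hgB ▸ hgS, h2⟩)
          · exact (three_same_tail hN (hZE h1) (hZE h2) (hS hgS) hne
              (fun hh => hgA hh.symm) (fun hh => hgB hh.symm) h hg1.symm).elim
      · have hex := (hcov e₁.2).1 (by rw [indeg_ne_zero_iff]; exact ⟨e₁, hZE h1, rfl⟩)
        obtain ⟨g, hgS, hg1⟩ := indeg_ne_zero_iff.mp hex
        by_cases hgA : g = e₁
        · exact Or.inl (Finset.mem_inter.mpr ⟨hgA ▸ hgS, h1⟩)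
        · by_cases hgB : g = e₂
          · exact Or.inr (Finset.mem_inter.mpr ⟨hgB ▸ hgS, h2⟩)
          · exact (three_same_head hN (hZE h1) (hZE h2) (hS hgS) hne
              (fun hh => hgA hh.symm) (fun hh => hgB hh.symm) h hg1.symm).elim
  · intro hadm v
    have getin : ∀ e ∈ E, ∃ i, e ∈ Z i := by
      intro e he
      rw [← hcover] at he
      obtain ⟨i, -, h⟩ := Finset.mem_biUnion.mp he
      exact ⟨i, h⟩
    constructor
    · intro hE
      have hle := (deg_le_two hN v).1
      rcases (show indeg E v = 1 ∨ indeg E v = 2 by omega) with h1 | h2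
      · obtain ⟨e, hfil⟩ := Finset.card_eq_one.mp h1
        have hmem : e ∈ E.filter (fun x => x.2 = v) := hfil ▸ Finset.mem_singleton_self e
        rw [Finset.mem_filter] at hmem
        obtain ⟨i, hi⟩ := getin e hmem.1
        have hin := (hadm i).2.1 e hi (Or.inr (by rw [hmem.2]; exact h1))
        rw [indeg_ne_zero_iff]
        exact ⟨e, (Finset.mem_inter.mp hin).1, hmem.2⟩
      · obtain ⟨a, b, hab, hfil⟩ := Finset.card_eq_two.mp h2
        have hmema : a ∈ E.filter (fun x => x.2 = v) := by rw [hfil]; simp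
        have hmemb : b ∈ E.filter (fun x => x.2 = v) := by rw [hfil]; simp
        rw [Finset.mem_filter] at hmema hmemb
        obtain ⟨i, hi⟩ := getin a hmema.1
        obtain ⟨j, hj⟩ := getin b hmemb.1
        have hsh : Shares a b := Or.inr (by rw [hmema.2, hmemb.2])
        have hij : i = j := same_trail hN hmax hdisj hmemb.1 hab hsh hi hj
        subst hij
        have := (hadm i).2.2 a hi b hj hab hsh
        rw [indeg_ne_zero_iff]
        rcases this with h | h
        · exact ⟨a, (Finset.mem_inter.mp h).1, hmema.2⟩
        · exact ⟨b, (Finset.mem_inter.mp h).1, hmemb.2⟩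
    · intro hE
      have hle := (deg_le_two hN v).2
      rcases (show outdeg E v = 1 ∨ outdeg E v = 2 by omega) with h1 | h2
      · obtain ⟨e, hfil⟩ := Finset.card_eq_one.mp h1
        have hmem : e ∈ E.filter (fun x => x.1 = v) := hfil ▸ Finset.mem_singleton_self e
        rw [Finset.mem_filter] at hmem
        obtain ⟨i, hi⟩ := getin e hmem.1
        have hin := (hadm i).2.1 e hi (Or.inl (by rw [hmem.2]; exact h1))
        rw [outdeg_ne_zero_iff]
        exact ⟨e, (Finset.mem_inter.mp hin).1, hmem.2⟩
      · obtain ⟨a, b, hab, hfil⟩ := Finset.card_eq_two.mp h2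
        have hmema : a ∈ E.filter (fun x => x.1 = v) := by rw [hfil]; simp
        have hmemb : b ∈ E.filter (fun x => x.1 = v) := by rw [hfil]; simp
        rw [Finset.mem_filter] at hmema hmemb
        obtain ⟨i, hi⟩ := getin a hmema.1
        obtain ⟨j, hj⟩ := getin b hmemb.1
        have hsh : Shares a b := Or.inl (by rw [hmema.2, hmemb.2])
        have hij : i = j := same_trail hN hmax hdisj hmemb.1 hab hsh hi hj
        subst hij
        have := (hadm i).2.2 a hi b hj hab hsh
        rw [outdeg_ne_zero_iff]
        rcases this with h | h
        · exact ⟨a, (Finset.mem_inter.mp h).1, hmema.2⟩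
        · exact ⟨b, (Finset.mem_inter.mp h).1, hmemb.2⟩

end AuxLemmas4

/-- `N[S]` is a minimal support network of `N` iff `S ∩ E(Zᵢ)` is B-admissible in `E(Zᵢ)`
for every maximal zig-zag trail `Zᵢ` of the decomposition of `N`. -/
theorem stmt7 (p : ℕ) (hp : 1 ≤ p) (X : Finset V) (hX : X.Nonempty)
    (E : Finset (V × V)) (hN : IsPhyloNet E p X)
    (d : ℕ) (Z : Fin d → Finset (V × V))
    (hmax : ∀ i, IsMaximalZigzagTrail E (Z i))
    (hdisj : ∀ i j, i ≠ j → Disjoint (Z i) (Z j))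
    (hcover : Finset.univ.biUnion Z = E)
    (S : Finset (V × V)) (hS : S ⊆ E) :
    IsMinimalSupportNet E S p X ↔ ∀ i, BAdmissible E (Z i) (S ∩ Z i) := by
  constructor
  · rintro ⟨hsup, hmin⟩ i
    refine ⟨(support_iff_adm hN hmax hdisj hcover hS).mp hsup i, ?_⟩
    intro T hT hadmT
    have hTZ : T ⊆ Z i := hT.subset.trans Finset.inter_subset_right
    set S' := (S \ Z i) ∪ T with hS'
    have hS'E : S' ⊆ E :=
      Finset.union_subset ((Finset.sdiff_subset).trans hS) (hTZ.trans (hmax i).1.1)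
    have h1 : S' ∩ Z i = T := by
      ext x
      simp only [hS', Finset.mem_inter, Finset.mem_union, Finset.mem_sdiff]
      constructor
      · rintro ⟨hx1 | hx1, hx2⟩
        · exact absurd hx2 hx1.2
        · exact hx1
      · intro hx
        exact ⟨Or.inr hx, hTZ hx⟩
    have h2 : ∀ j, j ≠ i → S' ∩ Z j = S ∩ Z j := by
      intro j hj
      ext x
      simp only [hS', Finset.mem_inter, Finset.mem_union, Finset.mem_sdiff]
      constructor
      · rintro ⟨hx1 | hx1, hx2⟩
        · exact ⟨hx1.1, hx2⟩
        · exact absurd hx2 (Finset.disjoint_left.mp (hdisj i j (Ne.symm hj)) (hTZ hx1))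
      · rintro ⟨hx1, hx2⟩
        refine ⟨Or.inl ⟨hx1, ?_⟩, hx2⟩
        exact Finset.disjoint_left.mp (hdisj j i hj) hx2
    have hS'sup : IsSupportNet E S' p X := by
      rw [support_iff_adm hN hmax hdisj hcover hS'E]
      intro j
      by_cases hji : j = i
      · subst hji; rw [h1]; exact hadmT
      · rw [h2 j hji]
        exact (support_iff_adm hN hmax hdisj hcover hS).mp hsup j
    have hss : S' ⊂ S := by
      constructor
      · exact Finset.union_subset Finset.sdiff_subset
          (hT.subset.trans Finset.inter_subset_left)
      · intro hcon
        obtain ⟨x, hx1, hx2⟩ := Finset.exists_of_ssubset hT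
        rw [Finset.mem_inter] at hx1
        have : x ∈ S' := hcon hx1.1
        simp only [hS', Finset.mem_union, Finset.mem_sdiff] at this
        rcases this with h | h
        · exact h.2 hx1.2
        · exact hx2 h
    exact hmin S' hS'sup hss
  · intro hB
    have hsup : IsSupportNet E S p X :=
      (support_iff_adm hN hmax hdisj hcover hS).mpr fun i => (hB i).1
    refine ⟨hsup, ?_⟩
    intro S' hsupS' hss
    obtain ⟨x, hxS, hxS'⟩ := Finset.exists_of_ssubset hss
    have hxE : x ∈ E := hS hxS
    have : x ∈ Finset.univ.biUnion Z := hcover ▸ hxE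
    obtain ⟨i, -, hxZ⟩ := Finset.mem_biUnion.mp this
    refine (hB i).2 (S' ∩ Z i) ?_ ((support_iff_adm hN hmax hdisj hcover hsupS'.1).mp hsupS' i)
    constructor
    · exact Finset.inter_subset_inter hss.subset le_rfl
    · intro hcon
      have : x ∈ S' ∩ Z i := hcon (Finset.mem_inter.mpr ⟨hxS, hxZ⟩)
      exact hxS' (Finset.mem_inter.mp this).1
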